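/- arXiv:2406.05218 — 2 statements merged into one kernel-verified Lean document; each statement's English description precedes it below -/
import Mathlib

section
/- Let (W,S) be a Coxeter system of rank n with reflection set R, and let W_n be the universal Coxeter group on the same generating set (all m_{ij} = ∞) with reflection set R_n. For any element v ∈ W represented by an S-reduced word s ∈ S*, one has l_R(v) ≤ l_{R_n}(ω_n(s)), where ω_n(s) denotes the element of W_n represented by s. -/
open CoxeterSystem

/-- Word length of `g` with respect to a generating set `R` (whose elements are involutions,
so inverses are not needed). -/
noncomputable def lenWrt {W : Type*} [Group W] (R : Set W) (g : W) : ℕ :=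
  sInf {n | ∃ l : List W, (∀ x ∈ l, x ∈ R) ∧ l.length = n ∧ l.prod = g}

/-- Reflection length in a Coxeter system. -/
noncomputable def rLen {B W : Type*} [Group W] {M : CoxeterMatrix B}
    (cs : CoxeterSystem M W) (w : W) : ℕ :=
  lenWrt {t | cs.IsReflection t} w

/-- The universal Coxeter matrix: all off-diagonal entries are `∞` (encoded as `0`). -/
def univMat (B : Type*) [DecidableEq B] : CoxeterMatrix B where
  M := Matrix.of fun i j => if i = j then 1 else 0
  isSymm := by
    ext i j
    simp [Matrix.transpose_apply, eq_comm]
  diagonal := fun i => by simp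
  off_diagonal := fun i j h => by simp [h]

/-- The reflection length of an element represented by an `S`-reduced word is at most the
reflection length of the element represented by the same word in the universal Coxeter
group on the same generators. -/
theorem reflection_length_le_universal {B W : Type*} [DecidableEq B] [Group W]
    {M : CoxeterMatrix B} (cs : CoxeterSystem M W) (v : W) (s : List B)
    (hred : cs.IsReduced s) (hv : cs.wordProd s = v) :
    rLen cs v ≤ rLen (univMat B).toCoxeterSystem ((univMat B).toCoxeterSystem.wordProd s) := by

  classical
  set cs' := (univMat B).toCoxeterSystem
  -- lift the identity on simples to a homomorphism from the universal group to W
  have hlift : (univMat B).IsLiftable cs.simple := by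
    intro i j
    by_cases h : i = j
    · subst h
      have : (univMat B) i i = 1 := (univMat B).diagonal i
      rw [this, pow_one, CoxeterSystem.simple_mul_simple_self]
    · have : (univMat B) i j = 0 := by
        show (Matrix.of fun i j => if i = j then 1 else 0) i j = 0
        simp [h]
      rw [this, pow_zero]
  set φ : (univMat B).Group →* W := cs'.lift ⟨cs.simple, hlift⟩ with hφ
  have hsimple : ∀ i, φ (cs'.simple i) = cs.simple i := fun i =>
    cs'.lift_apply_simple hlift i
  have hword : φ (cs'.wordProd s) = v := by
    rw [← hv]
    unfold CoxeterSystem.wordProd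
    rw [← List.prod_hom _ φ, List.map_map]
    congr 1
    apply List.map_congr_left
    intro i _
    exact hsimple i
  have hrefl : ∀ t, cs'.IsReflection t → cs.IsReflection (φ t) := by
    rintro t ⟨w, i, rfl⟩
    exact ⟨φ w, i, by simp [map_mul, hsimple]⟩
  -- main inequality on sInf
  unfold rLen lenWrt
  -- the set for the universal group is nonempty
  have hne : {n | ∃ l : List (univMat B).Group, (∀ x ∈ l, x ∈ {t | cs'.IsReflection t}) ∧
      l.length = n ∧ l.prod = cs'.wordProd s}.Nonempty := by
    refine ⟨s.length, s.map cs'.simple, ?_, by simp, rfl⟩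
    intro x hx
    obtain ⟨i, _, rfl⟩ := List.mem_map.mp hx
    exact cs'.isReflection_simple i
  obtain ⟨l, hl, hlen, hprod⟩ := Nat.sInf_mem hne
  apply Nat.sInf_le
  refine ⟨l.map φ, ?_, by simpa using hlen, ?_⟩
  · intro x hx
    obtain ⟨y, hy, rfl⟩ := List.mem_map.mp hx
    exact hrefl y (hl y hy)
  · rw [← hword, ← hprod, List.prod_hom]
end

section
/- Let W be the single braided Coxeter group of rank n ≥ 4 with all off-diagonal Coxeter matrix entries equal to k ≥ 3, generated by s₁,…,s_n. Then for all λ ∈ ℕ₀ and 1 ≤ r ≤ n, l_R(ω((s₁⋯s_n)^λ s₁⋯s_r)) ≤ λ(n − 2) + r − 2·1_{(λ + 1_{r≥2}) ≥ k}·(1 + ⌊(λ − k + 1_{r≥2})/(k − 1)⌋). -/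
open CoxeterSystem

section Aux

variable {B W : Type*} [Group W] {M : CoxeterMatrix B} (cs : CoxeterSystem M W)

theorem rLen_le_list (l : List W) (hl : ∀ x ∈ l, cs.IsReflection x) :
    rLen cs l.prod ≤ l.length := by
  unfold rLen lenWrt
  exact Nat.sInf_le ⟨l, hl, rfl, rfl⟩

theorem rLen_one_le : rLen cs 1 ≤ 0 := by
  have h := rLen_le_list cs [] (by simp)
  simpa using h

theorem exists_rLen_list (g : W) :
    ∃ l : List W, (∀ x ∈ l, cs.IsReflection x) ∧ l.length = rLen cs g ∧ l.prod = g := by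
  have hne : {m | ∃ l : List W, (∀ x ∈ l, x ∈ {t | cs.IsReflection t}) ∧ l.length = m
      ∧ l.prod = g}.Nonempty := by
    obtain ⟨ω, hω⟩ := cs.wordProd_surjective g
    refine ⟨(ω.map cs.simple).length, ω.map cs.simple, ?_, rfl, ?_⟩
    · intro x hx
      obtain ⟨i, _, rfl⟩ := List.mem_map.mp hx
      exact cs.isReflection_simple i
    · rw [← hω]; rfl
  have h : rLen cs g ∈ _ := Nat.sInf_mem hne
  obtain ⟨l, h1, h2, h3⟩ := h
  exact ⟨l, h1, h2, h3⟩

theorem rLen_mul_le (x y : W) : rLen cs (x * y) ≤ rLen cs x + rLen cs y := by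
  obtain ⟨l₁, h₁, hl₁, rfl⟩ := exists_rLen_list cs x
  obtain ⟨l₂, h₂, hl₂, rfl⟩ := exists_rLen_list cs y
  have h := rLen_le_list cs (l₁ ++ l₂) (by
    intro x hx
    rcases List.mem_append.mp hx with h | h
    exacts [h₁ x h, h₂ x h])
  simpa [hl₁, hl₂] using h

theorem conj_list_prod (w : W) (l : List W) :
    (l.map fun t => w * t * w⁻¹).prod = w * l.prod * w⁻¹ := by
  induction l with
  | nil => simp
  | cons a l ih =>
    rw [List.map_cons, List.prod_cons, List.prod_cons, ih]
    simp only [mul_assoc, inv_mul_cancel_left]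

theorem rLen_conj_le (w x : W) : rLen cs (w * x * w⁻¹) ≤ rLen cs x := by
  obtain ⟨l, h₁, hl, rfl⟩ := exists_rLen_list cs x
  have h := rLen_le_list cs (l.map fun t => w * t * w⁻¹) (by
    intro t ht
    obtain ⟨a, ha, rfl⟩ := List.mem_map.mp ht
    exact (h₁ a ha).conj w)
  rw [conj_list_prod] at h
  simpa [hl] using h

theorem le_rLen_conj (w x : W) : rLen cs x ≤ rLen cs (w * x * w⁻¹) := by
  have h := rLen_conj_le cs w⁻¹ (w * x * w⁻¹)
  have e : w⁻¹ * (w * x * w⁻¹) * w⁻¹⁻¹ = x := by group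
  rwa [e] at h

theorem rLen_wordProd_le (ω : List B) : rLen cs (cs.wordProd ω) ≤ ω.length := by
  have h := rLen_le_list cs (ω.map cs.simple) (by
    intro x hx
    obtain ⟨i, _, rfl⟩ := List.mem_map.mp hx
    exact cs.isReflection_simple i)
  simpa [CoxeterSystem.wordProd] using h

theorem rLen_simple_le (i : B) : rLen cs (cs.simple i) ≤ 1 := by
  have h := rLen_le_list cs [cs.simple i] (by simpa using cs.isReflection_simple i)
  simpa using h

/-- `a * (b*a)^m = (a*b)^m * a`. -/
theorem sandwich (a b : W) (m : ℕ) : a * (b * a) ^ m = (a * b) ^ m * a := by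
  have h : SemiconjBy a (b * a) (a * b) := by
    unfold SemiconjBy
    rw [← mul_assoc]
  exact (h.pow_right m).eq

theorem refl_pow_mul (m : ℕ) :
    ∀ i j : B, cs.IsReflection ((cs.simple i * cs.simple j) ^ m * cs.simple i) := by
  induction m with
  | zero => intro i j; simpa using cs.isReflection_simple i
  | succ m ih =>
    intro i j
    have h1 : (cs.simple i * cs.simple j) ^ (m + 1)
        = cs.simple i * ((cs.simple j * cs.simple i) ^ m * cs.simple j) := by
      rw [pow_succ', mul_assoc, sandwich]
    have key : (cs.simple i * cs.simple j) ^ (m + 1) * cs.simple i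
        = cs.simple i * ((cs.simple j * cs.simple i) ^ m * cs.simple j) * (cs.simple i)⁻¹ := by
      rw [cs.inv_simple, h1]
    rw [key]
    exact (ih j i).conj _

theorem rLen_conj_pow_le (w : W) (i j : B) (m : ℕ) :
    rLen cs (w * (cs.simple i * cs.simple j) ^ m * w⁻¹) ≤ 2 := by
  have c : ∀ z : W, cs.simple i * (cs.simple i * z) = z := fun z => by
    rw [← mul_assoc, cs.simple_mul_simple_self, one_mul]
  have key : w * (cs.simple i * cs.simple j) ^ m * w⁻¹
      = (w * ((cs.simple i * cs.simple j) ^ m * cs.simple i) * w⁻¹)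
        * (w * cs.simple i * w⁻¹) := by
    simp only [mul_assoc, inv_mul_cancel_left, c]
  rw [key]
  have h := rLen_le_list cs
    [w * ((cs.simple i * cs.simple j) ^ m * cs.simple i) * w⁻¹, w * cs.simple i * w⁻¹] (by
      intro x hx
      simp only [List.mem_cons, List.not_mem_nil, or_false] at hx
      rcases hx with rfl | rfl
      · exact (refl_pow_mul cs m i j).conj w
      · exact (cs.isReflection_simple i).conj w)
  simpa [mul_assoc] using h

/-- Telescoping peel: `(xy)^L (x^L)⁻¹` is a product of `L` conjugates of `y`. -/
theorem tele (x y : W) (K : ℕ) (hy : ∀ w : W, rLen cs (w * y * w⁻¹) ≤ K) :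
    ∀ L : ℕ, rLen cs ((x * y) ^ L * (x ^ L)⁻¹) ≤ K * L := by
  intro L
  induction L with
  | zero => simpa using rLen_one_le cs
  | succ L ih =>
    have h1 : (x * y) ^ (L + 1) * (x ^ (L + 1))⁻¹
        = ((x * y) ^ L * (x ^ L)⁻¹) * (x ^ (L + 1) * y * (x ^ (L + 1))⁻¹) := by
      simp only [pow_succ, mul_inv_rev]
      simp [mul_assoc]
    rw [h1, Nat.mul_succ]
    exact le_trans (rLen_mul_le cs _ _) (Nat.add_le_add ih (hy _))

/-- The core rank-4 bound:
`rLen ((XY)^L X) + 2·⌊L/(k-1)⌋ ≤ 2L+2`, by mutual `X↔Y` induction in steps of `k-1`. -/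
theorem core_aux (k : ℕ) (hk : 3 ≤ k) :
    ∀ L : ℕ, ∀ X Y : W, X ^ k = 1 → Y ^ k = 1 →
      (∀ (w : W) (m : ℕ), rLen cs (w * X ^ m * w⁻¹) ≤ 2) →
      (∀ (w : W) (m : ℕ), rLen cs (w * Y ^ m * w⁻¹) ≤ 2) →
      rLen cs ((X * Y) ^ L * X) + 2 * (L / (k - 1)) ≤ 2 * L + 2 := by
  intro L
  induction L using Nat.strong_induction_on with
  | _ L IH =>
    intro X Y hXk hYk hX hY
    by_cases hL : L < k - 1
    · have hdiv : L / (k - 1) = 0 := Nat.div_eq_of_lt hL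
      have h1 : (X * Y) ^ L * X = ((X * Y) ^ L * (X ^ L)⁻¹) * X ^ (L + 1) := by
        simp only [pow_succ]
        simp [mul_assoc]
      rw [hdiv, h1]
      have h2 := rLen_mul_le cs ((X * Y) ^ L * (X ^ L)⁻¹) (X ^ (L + 1))
      have h3 := tele cs X Y 2 (fun w => by simpa using hY w 1) L
      have h4 : rLen cs (X ^ (L + 1)) ≤ 2 := by simpa using hX 1 (L + 1)
      omega
    · push_neg at hL
      set L' := L - (k - 1) with hL'def
      have hL2 : L = L' + (k - 1) := by omega
      have hLlt : L' < L := by omega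
      have e1 : X ^ (k - 1) * X = 1 := by
        rw [← pow_succ]
        have hh : k - 1 + 1 = k := by omega
        rw [hh, hXk]
      have e2 : (X ^ (k - 2))⁻¹ * X⁻¹ = X := by
        rw [← mul_inv_rev]
        have h3 : X * X ^ (k - 2) = X ^ (k - 1) := by
          rw [← pow_succ']
          congr 1
          omega
        rw [h3, inv_eq_iff_mul_eq_one]
        exact e1
      have e2' : ∀ z : W, (X ^ (k - 2))⁻¹ * (X⁻¹ * z) = X * z := fun z => by
        rw [← mul_assoc, e2]
      have key : (X * Y) ^ L * X
          = ((X * Y) ^ (k - 2) * (X ^ (k - 2))⁻¹) * (X⁻¹ * ((Y * X) ^ L' * Y) * X⁻¹⁻¹) := by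
        rw [inv_inv]
        have A1 : L = (k - 2) + (L' + 1) := by omega
        calc (X * Y) ^ L * X = ((X * Y) ^ (k - 2) * (X * Y) ^ (L' + 1)) * X := by
              rw [← pow_add, ← A1]
          _ = (X * Y) ^ (k - 2) * ((X * Y) ^ (L' + 1) * X) := by rw [mul_assoc]
          _ = (X * Y) ^ (k - 2) * (X * (Y * X) ^ (L' + 1)) := by rw [sandwich]
          _ = ((X * Y) ^ (k - 2) * (X ^ (k - 2))⁻¹) * (X⁻¹ * ((Y * X) ^ L' * Y) * X) := by
              simp only [pow_succ, mul_assoc, e2']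
      rw [key]
      have b3 := rLen_mul_le cs ((X * Y) ^ (k - 2) * (X ^ (k - 2))⁻¹)
        (X⁻¹ * ((Y * X) ^ L' * Y) * X⁻¹⁻¹)
      have b1 := tele cs X Y 2 (fun w => by simpa using hY w 1) (k - 2)
      have b2 := rLen_conj_le cs X⁻¹ ((Y * X) ^ L' * Y)
      have IH' := IH L' hLlt Y X hYk hXk hY hX
      have hdiv : L / (k - 1) = L' / (k - 1) + 1 := by
        rw [hL2, Nat.add_div_right _ (by omega : 0 < k - 1)]
      rw [hdiv]
      omega

end Aux

set_option maxHeartbeats 2000000 in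
/-- Upper bound for the reflection length of `(s₁⋯s_n)^λ s₁⋯s_r` in the single braided
Coxeter group of rank `n ≥ 4` with all off-diagonal entries equal to `k ≥ 3`. -/
theorem reflection_length_upper_bound_high_rank {n : ℕ} {W : Type*} [Group W]
    {M : CoxeterMatrix (Fin n)} (cs : CoxeterSystem M W) (k : ℕ) (hk : 3 ≤ k) (hn : 4 ≤ n)
    (hM : ∀ i j, i ≠ j → M.M i j = k) (lam r : ℕ) (hr1 : 1 ≤ r) (hrn : r ≤ n) :
    rLen cs ((cs.wordProd (List.finRange n)) ^ lam * cs.wordProd ((List.finRange n).take r))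
      ≤ lam * (n - 2) + r -
          2 * (if k ≤ lam + (if 2 ≤ r then 1 else 0) then 1 else 0) *
            (1 + (lam + (if 2 ≤ r then 1 else 0) - k) / (k - 1)) := by
  set l : List (Fin n) := List.finRange n with hldef
  obtain ⟨i0, hi0⟩ : ∃ i : Fin n, (i : ℕ) = 0 := ⟨⟨0, by omega⟩, rfl⟩
  obtain ⟨i1, hi1⟩ : ∃ i : Fin n, (i : ℕ) = 1 := ⟨⟨1, by omega⟩, rfl⟩
  obtain ⟨i2, hi2⟩ : ∃ i : Fin n, (i : ℕ) = 2 := ⟨⟨2, by omega⟩, rfl⟩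
  obtain ⟨i3, hi3⟩ : ∃ i : Fin n, (i : ℕ) = 3 := ⟨⟨3, by omega⟩, rfl⟩
  set X : W := cs.simple i0 * cs.simple i1 with hXdef
  set Y : W := cs.simple i2 * cs.simple i3 with hYdef
  have hXk : X ^ k = 1 := by
    have hne : i0 ≠ i1 := by simp [Fin.ext_iff, hi0, hi1]
    have h := cs.simple_mul_simple_pow i0 i1
    rwa [hM i0 i1 hne] at h
  have hYk : Y ^ k = 1 := by
    have hne : i2 ≠ i3 := by simp [Fin.ext_iff, hi2, hi3]
    have h := cs.simple_mul_simple_pow i2 i3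
    rwa [hM i2 i3 hne] at h
  have hXrot : ∀ (w : W) (m : ℕ), rLen cs (w * X ^ m * w⁻¹) ≤ 2 :=
    fun w m => rLen_conj_pow_le cs w i0 i1 m
  have hYrot : ∀ (w : W) (m : ℕ), rLen cs (w * Y ^ m * w⁻¹) ≤ 2 :=
    fun w m => rLen_conj_pow_le cs w i2 i3 m
  have hYle : rLen cs Y ≤ 2 := by simpa using hYrot 1 1
  -- prefix products of the word of all generators
  have hstep : ∀ (j : ℕ) (hj : j < n) (i : Fin n), (i : ℕ) = j →
      cs.wordProd (l.take (j + 1)) = cs.wordProd (l.take j) * cs.simple i := by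
    intro j hj i hij
    have hj' : j < l.length := by simpa [hldef] using hj
    have h1 : l[j]? = some i := by
      rw [List.getElem?_eq_getElem hj']
      simp only [hldef, List.getElem_finRange, Option.some.injEq]
      exact Fin.ext (by simp [hij])
    rw [List.take_succ, h1, wordProd_append]
    simp
  have hp1 : cs.wordProd (l.take 1) = cs.simple i0 := by
    have h := hstep 0 (by omega) i0 hi0
    simpa using h
  have hp2 : cs.wordProd (l.take 2) = X := by
    have h := hstep 1 (by omega) i1 hi1
    rw [hp1] at h
    rw [hXdef]
    exact h
  have hp3 : cs.wordProd (l.take 3) = X * cs.simple i2 := by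
    have h := hstep 2 (by omega) i2 hi2
    rw [hp2] at h
    exact h
  have hp4 : cs.wordProd (l.take 4) = X * Y := by
    have h := hstep 3 (by omega) i3 hi3
    rw [hp3] at h
    rw [h, mul_assoc, hYdef]
  set v : W := cs.wordProd (l.drop 4) with hvdef
  have hc : cs.wordProd l = X * Y * v := by
    conv_lhs => rw [← List.take_append_drop 4 l]
    rw [wordProd_append, hp4]
  have hT : rLen cs (cs.wordProd l ^ lam * ((X * Y) ^ lam)⁻¹) ≤ (n - 4) * lam := by
    have hv : ∀ w : W, rLen cs (w * v * w⁻¹) ≤ n - 4 := by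
      intro w
      have h1 := rLen_conj_le cs w v
      have h2 : rLen cs v ≤ n - 4 := by
        have h3 := rLen_wordProd_le cs (l.drop 4)
        simpa [hldef] using h3
      omega
    have h := tele cs (X * Y) v (n - 4) hv lam
    rw [hc]
    exact h
  have hsplit : cs.wordProd l ^ lam * cs.wordProd (l.take r)
      = (cs.wordProd l ^ lam * ((X * Y) ^ lam)⁻¹)
        * ((X * Y) ^ lam * cs.wordProd (l.take r)) := by
    simp [mul_assoc]
  have hRL := rLen_mul_le cs (cs.wordProd l ^ lam * ((X * Y) ^ lam)⁻¹)
    ((X * Y) ^ lam * cs.wordProd (l.take r))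
  rw [← hsplit] at hRL
  have hnn : (n - 4) + 2 = n - 2 := by omega
  rcases (by omega : r = 1 ∨ r = 2 ∨ r = 3 ∨ 4 ≤ r) with hr | hr | hr | hr4
  · -- r = 1
    subst hr
    have hH : rLen cs ((X * Y) ^ lam * cs.wordProd (l.take 1)) + 2 * ((lam - 1) / (k - 1))
        ≤ 2 * lam + 1 := by
      rw [hp1]
      cases lam with
      | zero =>
        have e : (X * Y) ^ 0 * cs.simple i0 = cs.simple i0 := by simp
        rw [e]
        have h := rLen_simple_le cs i0
        have hz : (0 - 1 : ℕ) / (k - 1) = 0 := by simp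
        omega
      | succ μ =>
        have step1 : rLen cs ((X * Y) ^ (μ + 1) * cs.simple i0)
            ≤ rLen cs (cs.simple i0 * (X * Y) ^ (μ + 1)) := by
          have h := le_rLen_conj cs (cs.simple i0) ((X * Y) ^ (μ + 1) * cs.simple i0)
          have e : cs.simple i0 * ((X * Y) ^ (μ + 1) * cs.simple i0) * (cs.simple i0)⁻¹
              = cs.simple i0 * (X * Y) ^ (μ + 1) := by
            rw [cs.inv_simple]
            simp only [mul_assoc, cs.simple_mul_simple_self, mul_one]
          rwa [e] at h
        have e2 : cs.simple i0 * (X * Y) ^ (μ + 1)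
            = cs.simple i1 * ((Y * X) ^ μ * Y) := by
          rw [pow_succ']
          have e3 : X * Y * (X * Y) ^ μ = cs.simple i0 * (cs.simple i1 * (Y * (X * Y) ^ μ)) := by
            rw [hXdef]
            simp only [mul_assoc]
          rw [e3, ← mul_assoc, cs.simple_mul_simple_self, one_mul, sandwich]
        rw [e2] at step1
        have hcore := core_aux cs k hk μ Y X hYk hXk hYrot hXrot
        have hs1 := rLen_simple_le cs i1
        have hmm := rLen_mul_le cs (cs.simple i1) ((Y * X) ^ μ * Y)
        have hfin : (μ + 1 - 1 : ℕ) = μ := by omega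
        rw [hfin]
        omega
    have hBig : rLen cs (cs.wordProd l ^ lam * cs.wordProd (l.take 1))
        + 2 * ((lam - 1) / (k - 1)) ≤ lam * (n - 2) + 1 := by
      have hmul : (n - 4) * lam + (2 * lam + 1) = lam * (n - 2) + 1 := by
        calc (n - 4) * lam + (2 * lam + 1) = ((n - 4) + 2) * lam + 1 := by ring
          _ = (n - 2) * lam + 1 := by rw [hnn]
          _ = lam * (n - 2) + 1 := by ring
      omega
    have hr2 : ¬ (2 ≤ (1:ℕ)) := by norm_num
    simp only [if_neg hr2, add_zero]
    by_cases hcond : k ≤ lam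
    · have hdd : (lam - 1) / (k - 1) = (lam - k) / (k - 1) + 1 := by
        have e : lam - 1 = (lam - k) + (k - 1) := by omega
        rw [e, Nat.add_div_right _ (by omega : 0 < k - 1)]
      simp only [if_pos hcond]
      omega
    · simp only [if_neg hcond, mul_zero, zero_mul]
      omega
  · -- r = 2
    subst hr
    have hH : rLen cs ((X * Y) ^ lam * cs.wordProd (l.take 2)) + 2 * (lam / (k - 1))
        ≤ 2 * lam + 2 := by
      rw [hp2]
      exact core_aux cs k hk lam X Y hXk hYk hXrot hYrot
    have hBig : rLen cs (cs.wordProd l ^ lam * cs.wordProd (l.take 2))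
        + 2 * (lam / (k - 1)) ≤ lam * (n - 2) + 2 := by
      have hmul : (n - 4) * lam + (2 * lam + 2) = lam * (n - 2) + 2 := by
        calc (n - 4) * lam + (2 * lam + 2) = ((n - 4) + 2) * lam + 2 := by ring
          _ = (n - 2) * lam + 2 := by rw [hnn]
          _ = lam * (n - 2) + 2 := by ring
      omega
    have hr2 : (2 ≤ (2:ℕ)) := by norm_num
    simp only [if_pos hr2]
    by_cases hcond : k ≤ lam + 1
    · have hdd : lam / (k - 1) = (lam + 1 - k) / (k - 1) + 1 := by
        have e : lam = (lam + 1 - k) + (k - 1) := by omega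
        conv_lhs => rw [e]
        rw [Nat.add_div_right _ (by omega : 0 < k - 1)]
      simp only [if_pos hcond]
      omega
    · simp only [if_neg hcond, mul_zero, zero_mul]
      omega
  · -- r = 3
    subst hr
    have hH : rLen cs ((X * Y) ^ lam * cs.wordProd (l.take 3)) + 2 * (lam / (k - 1))
        ≤ 2 * lam + 3 := by
      rw [hp3]
      have e : (X * Y) ^ lam * (X * cs.simple i2) = ((X * Y) ^ lam * X) * cs.simple i2 :=
        (mul_assoc _ _ _).symm
      rw [e]
      have h1 := rLen_mul_le cs ((X * Y) ^ lam * X) (cs.simple i2)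
      have h2 := core_aux cs k hk lam X Y hXk hYk hXrot hYrot
      have h3 := rLen_simple_le cs i2
      omega
    have hBig : rLen cs (cs.wordProd l ^ lam * cs.wordProd (l.take 3))
        + 2 * (lam / (k - 1)) ≤ lam * (n - 2) + 3 := by
      have hmul : (n - 4) * lam + (2 * lam + 3) = lam * (n - 2) + 3 := by
        calc (n - 4) * lam + (2 * lam + 3) = ((n - 4) + 2) * lam + 3 := by ring
          _ = (n - 2) * lam + 3 := by rw [hnn]
          _ = lam * (n - 2) + 3 := by ring
      omega
    have hr2 : (2 ≤ (3:ℕ)) := by norm_num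
    simp only [if_pos hr2]
    by_cases hcond : k ≤ lam + 1
    · have hdd : lam / (k - 1) = (lam + 1 - k) / (k - 1) + 1 := by
        have e : lam = (lam + 1 - k) + (k - 1) := by omega
        conv_lhs => rw [e]
        rw [Nat.add_div_right _ (by omega : 0 < k - 1)]
      simp only [if_pos hcond]
      omega
    · simp only [if_neg hcond, mul_zero, zero_mul]
      omega
  · -- 4 ≤ r
    have hsplit4 : l.take r = l.take 4 ++ (l.drop 4).take (r - 4) := by
      have e : r = 4 + (r - 4) := by omega
      conv_lhs => rw [e]
      rw [List.take_add]
    have hτ : rLen cs (cs.wordProd ((l.drop 4).take (r - 4))) ≤ r - 4 := by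
      have h1 := rLen_wordProd_le cs ((l.drop 4).take (r - 4))
      have h2 : ((l.drop 4).take (r - 4)).length = r - 4 := by
        simp [hldef]
        omega
      rwa [h2] at h1
    have hH : rLen cs ((X * Y) ^ lam * cs.wordProd (l.take r)) + 2 * (lam / (k - 1))
        ≤ 2 * lam + r := by
      rw [hsplit4, wordProd_append, hp4]
      have e : (X * Y) ^ lam * (X * Y * cs.wordProd ((l.drop 4).take (r - 4)))
          = (((X * Y) ^ lam * X) * Y) * cs.wordProd ((l.drop 4).take (r - 4)) := by
        simp only [mul_assoc]
      rw [e]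
      have h1 := rLen_mul_le cs (((X * Y) ^ lam * X) * Y)
        (cs.wordProd ((l.drop 4).take (r - 4)))
      have h2 := rLen_mul_le cs ((X * Y) ^ lam * X) Y
      have h3 := core_aux cs k hk lam X Y hXk hYk hXrot hYrot
      omega
    have hBig : rLen cs (cs.wordProd l ^ lam * cs.wordProd (l.take r))
        + 2 * (lam / (k - 1)) ≤ lam * (n - 2) + r := by
      have hmul : (n - 4) * lam + (2 * lam + r) = lam * (n - 2) + r := by
        calc (n - 4) * lam + (2 * lam + r) = ((n - 4) + 2) * lam + r := by ring
          _ = (n - 2) * lam + r := by rw [hnn]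
          _ = lam * (n - 2) + r := by ring
      omega
    have hr2 : (2 ≤ r) := by omega
    simp only [if_pos hr2]
    by_cases hcond : k ≤ lam + 1
    · have hdd : lam / (k - 1) = (lam + 1 - k) / (k - 1) + 1 := by
        have e : lam = (lam + 1 - k) + (k - 1) := by omega
        conv_lhs => rw [e]
        rw [Nat.add_div_right _ (by omega : 0 < k - 1)]
      simp only [if_pos hcond]
      omega
    · simp only [if_neg hcond, mul_zero, zero_mul]
      omega
end
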